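/- Deviation of the SAGA estimated gradient from the full gradient at an arbitrary reference point (appendix lemma, corrected constants): Suppose Assumption 2 holds. Then for every x, y ∈ ℝ^N, every table φ = (φ_1,…,φ_m) of points of ℝ^N, and every integer A ≥ 1, E_{σ,i}[ ‖(∂Ĝ(σ,x,φ))^T ∇F_i(Ĝ(σ,x,φ)) − (∂G(y))^T ∇F_i(G(y))‖² ] ≤ 4(B_F² L_G² + B_G⁴ L_F²)·((1/A)·(1/m)∑_{j=1}^m ‖x − φ_j‖² + ‖x − y‖²). -/

import Mathlib

noncomputable section

open Finset
open scoped RealInnerProductSpace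

abbrev Euc (N : ℕ) := EuclideanSpace ℝ (Fin N)

/-- Frobenius norm of a linear map between Euclidean spaces: the square root of the
sum of the squared norms of the columns. -/
def frobNorm {N M : ℕ} (T : Euc N →L[ℝ] Euc M) : ℝ :=
  Real.sqrt (∑ j : Fin N, ‖T (EuclideanSpace.single j 1)‖ ^ 2)

/-- The averaged inner function `G = (1/m) ∑ⱼ Gⱼ`. -/
def Gbar {m N M : ℕ} (G : Fin m → Euc N → Euc M) (x : Euc N) : Euc M :=
  (m : ℝ)⁻¹ • ∑ j, G j x

/-- The averaged Jacobian `∂G = (1/m) ∑ⱼ ∂Gⱼ`. -/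
def Jbar {m N M : ℕ} (J : Fin m → Euc N → (Euc N →L[ℝ] Euc M)) (x : Euc N) :
    Euc N →L[ℝ] Euc M :=
  (m : ℝ)⁻¹ • ∑ j, J j x

/-- `Tᵀ v`: the transpose (adjoint) of `T` applied to `v`. -/
def transApp {N M : ℕ} (T : Euc N →L[ℝ] Euc M) (v : Euc M) : Euc N :=
  ContinuousLinearMap.adjoint T v

/-- Assumption 2 of the paper: bounded gradients, Lipschitz gradients, bounded
Jacobians (Frobenius norm), Lipschitz inner functions and Lipschitz Jacobians. -/
def Assumption2 {n m N M : ℕ} (G : Fin m → Euc N → Euc M)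
    (J : Fin m → Euc N → (Euc N →L[ℝ] Euc M))
    (gradF : Fin n → Euc M → Euc M) (BF LF BG LG : ℝ) : Prop :=
  (∀ i y, ‖gradF i y‖ ≤ BF) ∧
  (∀ i y y', ‖gradF i y - gradF i y'‖ ≤ LF * ‖y - y'‖) ∧
  (∀ j x, frobNorm (J j x) ≤ BG) ∧
  (∀ j x x', ‖G j x - G j x'‖ ≤ BG * ‖x - x'‖) ∧
  (∀ j x x', frobNorm (J j x - J j x') ≤ LG * ‖x - x'‖)

/-- Continuous differentiability of the data, with the prescribed Jacobians and
gradients. -/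
def SmoothData {n m N M : ℕ} (Fi : Fin n → Euc M → ℝ) (G : Fin m → Euc N → Euc M)
    (J : Fin m → Euc N → (Euc N →L[ℝ] Euc M)) (gradF : Fin n → Euc M → Euc M) : Prop :=
  (∀ j x, HasFDerivAt (G j) (J j x) x) ∧ (∀ j, Continuous (J j)) ∧
  (∀ i y, HasGradientAt (Fi i) (gradF i y) y) ∧ (∀ i, Continuous (gradF i))

/-- Uniform average over all tuples `σ ∈ {1,…,m}^A`. -/
def Esig {m A : ℕ} (f : (Fin A → Fin m) → ℝ) : ℝ :=
  (∑ σ : Fin A → Fin m, f σ) / (m ^ A : ℝ)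

/-- The SAGA estimator `Ĝ(σ,x,φ)` of the inner function. -/
def GhatSAGA {m N M : ℕ} (G : Fin m → Euc N → Euc M) {A : ℕ}
    (σ : Fin A → Fin m) (x : Euc N) (φ : Fin m → Euc N) : Euc M :=
  (A : ℝ)⁻¹ • ∑ l, (G (σ l) x - G (σ l) (φ (σ l))) + (m : ℝ)⁻¹ • ∑ j, G j (φ j)

/-- The SAGA estimator `∂Ĝ(σ,x,φ)` of the Jacobian. -/
def JhatSAGA {m N M : ℕ} (J : Fin m → Euc N → (Euc N →L[ℝ] Euc M)) {A : ℕ}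
    (σ : Fin A → Fin m) (x : Euc N) (φ : Fin m → Euc N) : Euc N →L[ℝ] Euc M :=
  (A : ℝ)⁻¹ • ∑ l, (J (σ l) x - J (σ l) (φ (σ l))) + (m : ℝ)⁻¹ • ∑ j, J j (φ j)


def colVec {N M : ℕ} : (Euc N →L[ℝ] Euc M) →ₗ[ℝ] PiLp 2 (fun _ : Fin N => Euc M) where
  toFun T := WithLp.toLp 2 (fun j => T (EuclideanSpace.single j 1))
  map_add' S T := by ext j; simp
  map_smul' c T := by ext j; simp

lemma frobNorm_eq {N M : ℕ} (T : Euc N →L[ℝ] Euc M) : frobNorm T = ‖colVec T‖ := by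
  rw [frobNorm, ← Real.sqrt_sq (norm_nonneg (colVec T)), PiLp.norm_sq_eq_of_L2]
  rfl

lemma norm_transApp_le {N M : ℕ} (T : Euc N →L[ℝ] Euc M) (v : Euc M) :
    ‖transApp T v‖ ≤ ‖colVec T‖ * ‖v‖ := by
  have h1 : ‖transApp T v‖ ^ 2 ≤ (‖colVec T‖ * ‖v‖) ^ 2 := by
    have hw : ∀ j : Fin N, transApp T v j = ⟪T (EuclideanSpace.single j 1), v⟫ := by
      intro j
      rw [transApp, ← ContinuousLinearMap.adjoint_inner_right,
        EuclideanSpace.inner_single_left]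
      simp
    have h2 : ‖transApp T v‖ ^ 2 = ∑ j : Fin N, ⟪T (EuclideanSpace.single j 1), v⟫ ^ 2 := by
      rw [PiLp.norm_sq_eq_of_L2]
      exact Finset.sum_congr rfl fun j _ => by
        rw [Real.norm_eq_abs, sq_abs, hw j]
    rw [h2, mul_pow, PiLp.norm_sq_eq_of_L2, Finset.sum_mul]
    refine Finset.sum_le_sum fun j _ => ?_
    have := abs_real_inner_le_norm (T (EuclideanSpace.single j 1)) v
    calc ⟪T (EuclideanSpace.single j 1), v⟫ ^ 2 ≤ (‖T (EuclideanSpace.single j 1)‖ * ‖v‖) ^ 2 := by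
          rw [← sq_abs]; exact pow_le_pow_left₀ (abs_nonneg _) this 2
      _ = ‖colVec T j‖ ^ 2 * ‖v‖ ^ 2 := by rw [mul_pow]; rfl
  exact pow_le_pow_iff_left₀ (norm_nonneg _) (by positivity) two_ne_zero |>.mp h1

lemma core_sum_sq {E : Type*} [NormedAddCommGroup E] [InnerProductSpace ℝ E]
    {m : ℕ} (w : Fin m → E) (hw : ∑ j, w j = 0) : ∀ A : ℕ,
    (m : ℝ) * ∑ σ : Fin A → Fin m, ‖∑ l, w (σ l)‖ ^ 2
      = (A : ℝ) * (m : ℝ) ^ A * ∑ j, ‖w j‖ ^ 2 := by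
  intro A
  induction A with
  | zero => simp
  | succ A ih =>
    have hsum := Fintype.sum_equiv (Fin.consEquiv (fun _ : Fin (A+1) => Fin m))
      (fun p : Fin m × (Fin A → Fin m) => ‖w p.1 + ∑ l, w (p.2 l)‖ ^ 2)
      (fun σ : Fin (A+1) → Fin m => ‖∑ l, w (σ l)‖ ^ 2)
      (fun p => by
        congr 1
        rw [Fin.sum_univ_succ]
        simp [Fin.consEquiv])
    rw [← hsum, Fintype.sum_prod_type]
    have expand : ∀ (a : Fin m) (τ : Fin A → Fin m),
        ‖w a + ∑ l, w (τ l)‖ ^ 2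
          = ‖w a‖ ^ 2 + 2 * ⟪w a, ∑ l, w (τ l)⟫ + ‖∑ l, w (τ l)‖ ^ 2 :=
      fun a τ => norm_add_sq_real _ _
    have split : ∑ a : Fin m, ∑ τ : Fin A → Fin m, ‖w a + ∑ l, w (τ l)‖ ^ 2
        = (∑ a : Fin m, ∑ τ : Fin A → Fin m, ‖w a‖ ^ 2)
          + (∑ a : Fin m, ∑ τ : Fin A → Fin m, 2 * ⟪w a, ∑ l, w (τ l)⟫)
          + ∑ a : Fin m, ∑ τ : Fin A → Fin m, ‖∑ l, w (τ l)‖ ^ 2 := by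
      simp_rw [expand, Finset.sum_add_distrib]
    have c1 : ∑ a : Fin m, ∑ _τ : Fin A → Fin m, ‖w a‖ ^ 2
        = (m:ℝ)^A * ∑ a, ‖w a‖^2 := by
      simp [Finset.sum_const, Finset.card_univ, Fintype.card_fun, Finset.mul_sum,
        mul_comm]
    have c2 : ∑ a : Fin m, ∑ τ : Fin A → Fin m, 2 * ⟪w a, ∑ l, w (τ l)⟫ = 0 := by
      rw [Finset.sum_comm]
      refine Finset.sum_eq_zero fun τ _ => ?_
      rw [← Finset.mul_sum, ← sum_inner, hw]
      simp
    have c3 : ∑ a : Fin m, ∑ τ : Fin A → Fin m, ‖∑ l, w (τ l)‖ ^ 2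
        = (m:ℝ) * ∑ τ : Fin A → Fin m, ‖∑ l, w (τ l)‖ ^ 2 := by
      simp [Finset.sum_const, Finset.card_univ]
    rw [split, c1, c2, c3, add_zero, mul_add, ih]
    push_cast
    ring

lemma sum_sub_mean_sq_le {E : Type*} [NormedAddCommGroup E] [InnerProductSpace ℝ E]
    {m : ℕ} (hm : 0 < m) (u : Fin m → E) :
    ∑ j, ‖u j - (m:ℝ)⁻¹ • ∑ k, u k‖ ^ 2 ≤ ∑ j, ‖u j‖ ^ 2 := by
  have hm' : (m:ℝ) ≠ 0 := Nat.cast_ne_zero.mpr hm.ne'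
  set ub := (m:ℝ)⁻¹ • ∑ k, u k with hub
  have hsm : ∑ k, u k = (m:ℝ) • ub := by rw [hub, smul_inv_smul₀ hm']
  have expand : ∀ j, ‖u j - ub‖ ^ 2 = ‖u j‖ ^ 2 - 2 * ⟪u j, ub⟫ + ‖ub‖ ^ 2 :=
    fun j => norm_sub_sq_real _ _
  simp_rw [expand]
  rw [Finset.sum_add_distrib, Finset.sum_sub_distrib, ← Finset.mul_sum, ← sum_inner, hsm,
    real_inner_smul_left, Finset.sum_const, Finset.card_univ, Fintype.card_fin,
    nsmul_eq_mul, real_inner_self_eq_norm_sq]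
  nlinarith [sq_nonneg ‖ub‖, show (0:ℝ) < (m:ℝ) from Nat.cast_pos.mpr hm]

lemma esig_dev {E : Type*} [NormedAddCommGroup E] [InnerProductSpace ℝ E]
    {m A : ℕ} (hm : 0 < m) (hA : 0 < A) (u : Fin m → E) (c : E) :
    (∑ σ : Fin A → Fin m, ‖(A:ℝ)⁻¹ • ∑ l, u (σ l) - (m:ℝ)⁻¹ • ∑ j, u j + c‖ ^ 2) / ((m:ℝ)^A)
      ≤ 2 * ((A:ℝ)⁻¹ * ((m:ℝ)⁻¹ * ∑ j, ‖u j‖ ^ 2)) + 2 * ‖c‖ ^ 2 := by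
  have hm' : (m:ℝ) ≠ 0 := Nat.cast_ne_zero.mpr hm.ne'
  have hA' : (A:ℝ) ≠ 0 := Nat.cast_ne_zero.mpr hA.ne'
  have hP : (0:ℝ) < (m:ℝ)^A := by positivity
  set ub := (m:ℝ)⁻¹ • ∑ j, u j with hub
  set w : Fin m → E := fun j => u j - ub with hwdef
  have hsm : ∑ k, u k = (m:ℝ) • ub := by rw [hub, smul_inv_smul₀ hm']
  have hw : ∑ j, w j = 0 := by
    rw [hwdef]
    rw [Finset.sum_sub_distrib, Finset.sum_const, Finset.card_univ, Fintype.card_fin,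
      hsm, ← Nat.cast_smul_eq_nsmul ℝ m ub, sub_self]
  have key : ∀ σ : Fin A → Fin m,
      (A:ℝ)⁻¹ • ∑ l, u (σ l) - ub + c = (A:ℝ)⁻¹ • (∑ l, w (σ l)) + c := by
    intro σ
    rw [hwdef]
    simp only []
    rw [Finset.sum_sub_distrib, Finset.sum_const, Finset.card_univ, Fintype.card_fin,
      ← Nat.cast_smul_eq_nsmul ℝ A ub, smul_sub, smul_smul, inv_mul_cancel₀ hA', one_smul]
  have hw_le : ∑ j, ‖w j‖ ^ 2 ≤ ∑ j, ‖u j‖ ^ 2 := sum_sub_mean_sq_le hm u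
  have hcore := core_sum_sq w hw A
  have ptwise : ∀ σ : Fin A → Fin m,
      ‖(A:ℝ)⁻¹ • ∑ l, u (σ l) - ub + c‖ ^ 2
        ≤ 2 * ((A:ℝ)⁻¹ ^ 2 * ‖∑ l, w (σ l)‖ ^ 2) + 2 * ‖c‖ ^ 2 := by
    intro σ
    rw [key σ]
    have h1 : ‖(A:ℝ)⁻¹ • (∑ l, w (σ l)) + c‖ ≤ ‖(A:ℝ)⁻¹ • (∑ l, w (σ l))‖ + ‖c‖ :=
      norm_add_le _ _
    have h2 : ‖(A:ℝ)⁻¹ • (∑ l, w (σ l))‖ = (A:ℝ)⁻¹ * ‖∑ l, w (σ l)‖ := by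
      rw [norm_smul, Real.norm_eq_abs, abs_of_nonneg (by positivity)]
    nlinarith [norm_nonneg ((A:ℝ)⁻¹ • (∑ l, w (σ l)) + c), norm_nonneg c,
      norm_nonneg ((A:ℝ)⁻¹ • (∑ l, w (σ l))),
      sq_nonneg (‖(A:ℝ)⁻¹ • (∑ l, w (σ l))‖ - ‖c‖)]
  have sum_bound : (∑ σ : Fin A → Fin m, ‖(A:ℝ)⁻¹ • ∑ l, u (σ l) - ub + c‖ ^ 2)
      ≤ 2 * (A:ℝ)⁻¹ ^ 2 * ((A:ℝ) * ((m:ℝ)^A * ((m:ℝ)⁻¹ * ∑ j, ‖w j‖ ^ 2)))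
        + (m:ℝ)^A * (2 * ‖c‖ ^ 2) := by
    calc (∑ σ : Fin A → Fin m, ‖(A:ℝ)⁻¹ • ∑ l, u (σ l) - ub + c‖ ^ 2)
        ≤ ∑ σ : Fin A → Fin m, (2 * ((A:ℝ)⁻¹ ^ 2 * ‖∑ l, w (σ l)‖ ^ 2) + 2 * ‖c‖ ^ 2) :=
          Finset.sum_le_sum fun σ _ => ptwise σ
      _ = 2 * (A:ℝ)⁻¹ ^ 2 * (∑ σ : Fin A → Fin m, ‖∑ l, w (σ l)‖ ^ 2)
            + (m:ℝ)^A * (2 * ‖c‖ ^ 2) := by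
          rw [Finset.sum_add_distrib]
          congr 1
          · rw [Finset.mul_sum]
            exact Finset.sum_congr rfl fun σ _ => by ring
          · rw [Finset.sum_const, Finset.card_univ, Fintype.card_fun, Fintype.card_fin,
              Fintype.card_fin, nsmul_eq_mul]
            push_cast
            ring
      _ ≤ _ := by
          have heq : (∑ σ : Fin A → Fin m, ‖∑ l, w (σ l)‖ ^ 2)
              = (A:ℝ) * ((m:ℝ)^A * ((m:ℝ)⁻¹ * ∑ j, ‖w j‖ ^ 2)) := by
            have h3 : (A:ℝ) * ((m:ℝ)^A * ((m:ℝ)⁻¹ * ∑ j, ‖w j‖ ^ 2))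
                = ((A:ℝ) * (m:ℝ)^A * ∑ j, ‖w j‖ ^ 2) * (m:ℝ)⁻¹ := by ring
            rw [h3, ← hcore, mul_comm (m:ℝ), mul_assoc, mul_inv_cancel₀ hm', mul_one]
          rw [heq]
  have final : (2 * (A:ℝ)⁻¹ ^ 2 * ((A:ℝ) * ((m:ℝ)^A * ((m:ℝ)⁻¹ * ∑ j, ‖w j‖ ^ 2)))
      + (m:ℝ)^A * (2 * ‖c‖ ^ 2)) / (m:ℝ)^A
      = 2 * ((A:ℝ)⁻¹ * ((m:ℝ)⁻¹ * ∑ j, ‖w j‖ ^ 2)) + 2 * ‖c‖ ^ 2 := by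
    field_simp
  calc (∑ σ : Fin A → Fin m, ‖(A:ℝ)⁻¹ • ∑ l, u (σ l) - ub + c‖ ^ 2) / ((m:ℝ)^A)
      ≤ (2 * (A:ℝ)⁻¹ ^ 2 * ((A:ℝ) * ((m:ℝ)^A * ((m:ℝ)⁻¹ * ∑ j, ‖w j‖ ^ 2)))
          + (m:ℝ)^A * (2 * ‖c‖ ^ 2)) / (m:ℝ)^A := by
        gcongr
      _ = 2 * ((A:ℝ)⁻¹ * ((m:ℝ)⁻¹ * ∑ j, ‖w j‖ ^ 2)) + 2 * ‖c‖ ^ 2 := final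
      _ ≤ _ := by gcongr <;> positivity

lemma avg_norm_le {E : Type*} [NormedAddCommGroup E] [NormedSpace ℝ E] {m : ℕ} (hm : 0 < m)
    (v : Fin m → E) (C : ℝ) (h : ∀ j, ‖v j‖ ≤ C) : ‖(m:ℝ)⁻¹ • ∑ j, v j‖ ≤ C := by
  have hm' : (0:ℝ) < (m:ℝ) := Nat.cast_pos.mpr hm
  rw [norm_smul, Real.norm_eq_abs, abs_of_nonneg (by positivity)]
  have h1 : ‖∑ j, v j‖ ≤ (m:ℝ) * C := by
    calc ‖∑ j, v j‖ ≤ ∑ j, ‖v j‖ := norm_sum_le _ _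
      _ ≤ ∑ _j : Fin m, C := Finset.sum_le_sum fun j _ => h j
      _ = (m:ℝ) * C := by
          rw [Finset.sum_const, Finset.card_univ, Fintype.card_fin, nsmul_eq_mul]
  calc (m:ℝ)⁻¹ * ‖∑ j, v j‖ ≤ (m:ℝ)⁻¹ * ((m:ℝ) * C) := by
        exact mul_le_mul_of_nonneg_left h1 (by positivity)
    _ = C := by field_simp

set_option maxHeartbeats 1600000 in
/-- Deviation of the SAGA estimated gradient from the full gradient at an arbitrary
reference point (corrected constants). -/
theorem saga_gradient_deviation_reference_bound
    {n m N M A : ℕ} (hn : 0 < n) (hm : 0 < m) (hA : 0 < A)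
    (BF LF BG LG : ℝ) (hBF : 0 < BF) (hLF : 0 < LF) (hBG : 0 < BG) (hLG : 0 < LG)
    (Fi : Fin n → Euc M → ℝ) (G : Fin m → Euc N → Euc M)
    (J : Fin m → Euc N → (Euc N →L[ℝ] Euc M)) (gradF : Fin n → Euc M → Euc M)
    (hsm : SmoothData Fi G J gradF)
    (hA2 : Assumption2 G J gradF BF LF BG LG)
    (x y : Euc N) (φ : Fin m → Euc N) :
    (n : ℝ)⁻¹ * ∑ i, Esig (fun σ : Fin A → Fin m =>
        ‖transApp (JhatSAGA J σ x φ) (gradF i (GhatSAGA G σ x φ)) -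
          transApp (Jbar J y) (gradF i (Gbar G y))‖ ^ 2)
      ≤ 4 * (BF ^ 2 * LG ^ 2 + BG ^ 4 * LF ^ 2) *
          ((1 / (A : ℝ)) * ((m : ℝ)⁻¹ * ∑ j, ‖x - φ j‖ ^ 2) + ‖x - y‖ ^ 2) := by
  obtain ⟨hBFb, hLFlip, hJb, hGlip, hJlip⟩ := hA2
  have hm' : (0:ℝ) < (m:ℝ) := Nat.cast_pos.mpr hm
  have hn' : (0:ℝ) < (n:ℝ) := Nat.cast_pos.mpr hn
  have hA' : (0:ℝ) < (A:ℝ) := Nat.cast_pos.mpr hA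
  have hP : (0:ℝ) < (m:ℝ)^A := by positivity
  have hKnn : (0:ℝ) ≤ (A:ℝ)⁻¹ * ((m:ℝ)⁻¹ * ∑ j, ‖x - φ j‖ ^ 2) + ‖x - y‖ ^ 2 := by
    positivity
  -- Jacobian bounds via colVec
  have hJb' : ∀ j z, ‖colVec (J j z)‖ ≤ BG := fun j z => (frobNorm_eq _) ▸ hJb j z
  have hJlip' : ∀ j z z', ‖colVec (J j z - J j z')‖ ≤ LG * ‖z - z'‖ :=
    fun j z z' => (frobNorm_eq _) ▸ hJlip j z z'
  -- norm bounds on the reference terms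
  have hcG : ‖Gbar G x - Gbar G y‖ ≤ BG * ‖x - y‖ := by
    have h : Gbar G x - Gbar G y = (m:ℝ)⁻¹ • ∑ j, (G j x - G j y) := by
      rw [Gbar, Gbar, Finset.sum_sub_distrib, smul_sub]
    rw [h]
    exact avg_norm_le hm _ _ fun j => hGlip j x y
  have hcJ : ‖colVec (Jbar J x - Jbar J y)‖ ≤ LG * ‖x - y‖ := by
    have h : colVec (Jbar J x - Jbar J y) = (m:ℝ)⁻¹ • ∑ j, colVec (J j x - J j y) := by
      rw [Jbar, Jbar, map_sub, map_smul, map_smul, map_sum, map_sum, ← smul_sub,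
        ← Finset.sum_sub_distrib]
      simp [map_sub]
    rw [h]
    exact avg_norm_le hm _ _ fun j => hJlip' j x y
  have hJbary : ‖colVec (Jbar J y)‖ ≤ BG := by
    have h : colVec (Jbar J y) = (m:ℝ)⁻¹ • ∑ j, colVec (J j y) := by
      rw [Jbar, map_smul, map_sum]
    rw [h]
    exact avg_norm_le hm _ _ fun j => hJb' j y
  -- representations of the deviations
  have repG : ∀ σ : Fin A → Fin m, GhatSAGA G σ x φ - Gbar G y
      = (A:ℝ)⁻¹ • ∑ l, (fun j => G j x - G j (φ j)) (σ l)
        - (m:ℝ)⁻¹ • ∑ j, (fun j => G j x - G j (φ j)) j + (Gbar G x - Gbar G y) := by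
    intro σ
    simp only [GhatSAGA, Gbar, Finset.sum_sub_distrib, smul_sub]
    abel
  have repJ : ∀ σ : Fin A → Fin m, colVec (JhatSAGA J σ x φ - Jbar J y)
      = (A:ℝ)⁻¹ • ∑ l, (fun j => colVec (J j x - J j (φ j))) (σ l)
        - (m:ℝ)⁻¹ • ∑ j, (fun j => colVec (J j x - J j (φ j))) j
        + colVec (Jbar J x - Jbar J y) := by
    intro σ
    simp only [JhatSAGA, Jbar, map_sub, map_add, map_smul, map_sum,
      Finset.sum_sub_distrib, smul_sub]
    abel
  -- Esig bounds for the two deviations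
  have hEG : Esig (fun σ : Fin A → Fin m => ‖GhatSAGA G σ x φ - Gbar G y‖ ^ 2)
      ≤ 2 * BG ^ 2 * ((A:ℝ)⁻¹ * ((m:ℝ)⁻¹ * ∑ j, ‖x - φ j‖ ^ 2) + ‖x - y‖ ^ 2) := by
    have hdev := esig_dev hm hA (fun j => G j x - G j (φ j)) (Gbar G x - Gbar G y)
    rw [Esig]
    simp only [repG]
    push_cast
    refine hdev.trans ?_
    have h1 : ∑ j, ‖(fun j => G j x - G j (φ j)) j‖ ^ 2 ≤ BG ^ 2 * ∑ j, ‖x - φ j‖ ^ 2 := by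
      rw [Finset.mul_sum]
      refine Finset.sum_le_sum fun j _ => ?_
      have := hGlip j x (φ j)
      nlinarith [norm_nonneg (G j x - G j (φ j)), norm_nonneg (x - φ j)]
    have h2 : ‖Gbar G x - Gbar G y‖ ^ 2 ≤ BG ^ 2 * ‖x - y‖ ^ 2 := by
      nlinarith [norm_nonneg (Gbar G x - Gbar G y), norm_nonneg (x - y)]
    calc 2 * ((A:ℝ)⁻¹ * ((m:ℝ)⁻¹ * ∑ j, ‖(fun j => G j x - G j (φ j)) j‖ ^ 2))
          + 2 * ‖Gbar G x - Gbar G y‖ ^ 2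
        ≤ 2 * ((A:ℝ)⁻¹ * ((m:ℝ)⁻¹ * (BG ^ 2 * ∑ j, ‖x - φ j‖ ^ 2)))
          + 2 * (BG ^ 2 * ‖x - y‖ ^ 2) := by gcongr
      _ = 2 * BG ^ 2 * ((A:ℝ)⁻¹ * ((m:ℝ)⁻¹ * ∑ j, ‖x - φ j‖ ^ 2) + ‖x - y‖ ^ 2) := by
          ring
  have hEJ : Esig (fun σ : Fin A → Fin m => ‖colVec (JhatSAGA J σ x φ - Jbar J y)‖ ^ 2)
      ≤ 2 * LG ^ 2 * ((A:ℝ)⁻¹ * ((m:ℝ)⁻¹ * ∑ j, ‖x - φ j‖ ^ 2) + ‖x - y‖ ^ 2) := by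
    have hdev := esig_dev hm hA (fun j => colVec (J j x - J j (φ j)))
      (colVec (Jbar J x - Jbar J y))
    rw [Esig]
    simp only [repJ]
    push_cast
    refine hdev.trans ?_
    have h1 : ∑ j, ‖(fun j => colVec (J j x - J j (φ j))) j‖ ^ 2
        ≤ LG ^ 2 * ∑ j, ‖x - φ j‖ ^ 2 := by
      rw [Finset.mul_sum]
      refine Finset.sum_le_sum fun j _ => ?_
      have := hJlip' j x (φ j)
      nlinarith [norm_nonneg (colVec (J j x - J j (φ j))), norm_nonneg (x - φ j)]
    have h2 : ‖colVec (Jbar J x - Jbar J y)‖ ^ 2 ≤ LG ^ 2 * ‖x - y‖ ^ 2 := by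
      nlinarith [norm_nonneg (colVec (Jbar J x - Jbar J y)), norm_nonneg (x - y)]
    calc 2 * ((A:ℝ)⁻¹ * ((m:ℝ)⁻¹ * ∑ j, ‖(fun j => colVec (J j x - J j (φ j))) j‖ ^ 2))
          + 2 * ‖colVec (Jbar J x - Jbar J y)‖ ^ 2
        ≤ 2 * ((A:ℝ)⁻¹ * ((m:ℝ)⁻¹ * (LG ^ 2 * ∑ j, ‖x - φ j‖ ^ 2)))
          + 2 * (LG ^ 2 * ‖x - y‖ ^ 2) := by gcongr
      _ = 2 * LG ^ 2 * ((A:ℝ)⁻¹ * ((m:ℝ)⁻¹ * ∑ j, ‖x - φ j‖ ^ 2) + ‖x - y‖ ^ 2) := by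
          ring
  -- pointwise bound
  have hpt : ∀ (i : Fin n) (σ : Fin A → Fin m),
      ‖transApp (JhatSAGA J σ x φ) (gradF i (GhatSAGA G σ x φ)) -
          transApp (Jbar J y) (gradF i (Gbar G y))‖ ^ 2
        ≤ 2 * BF ^ 2 * ‖colVec (JhatSAGA J σ x φ - Jbar J y)‖ ^ 2
          + 2 * (BG ^ 2 * LF ^ 2) * ‖GhatSAGA G σ x φ - Gbar G y‖ ^ 2 := by
    intro i σ
    set g1 := gradF i (GhatSAGA G σ x φ) with hg1
    set g2 := gradF i (Gbar G y) with hg2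
    have hdecomp : transApp (JhatSAGA J σ x φ) g1 - transApp (Jbar J y) g2
        = transApp (JhatSAGA J σ x φ - Jbar J y) g1 + transApp (Jbar J y) (g1 - g2) := by
      simp only [transApp, map_sub, ContinuousLinearMap.sub_apply]
      abel
    rw [hdecomp]
    have ha : ‖transApp (JhatSAGA J σ x φ - Jbar J y) g1‖
        ≤ ‖colVec (JhatSAGA J σ x φ - Jbar J y)‖ * BF := by
      refine (norm_transApp_le _ _).trans ?_
      exact mul_le_mul_of_nonneg_left (hBFb i _) (norm_nonneg _)
    have hb : ‖transApp (Jbar J y) (g1 - g2)‖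
        ≤ BG * (LF * ‖GhatSAGA G σ x φ - Gbar G y‖) := by
      refine (norm_transApp_le _ _).trans ?_
      have hl := hLFlip i (GhatSAGA G σ x φ) (Gbar G y)
      exact mul_le_mul hJbary hl (norm_nonneg _) hBG.le
    have htri := norm_add_le (transApp (JhatSAGA J σ x φ - Jbar J y) g1)
      (transApp (Jbar J y) (g1 - g2))
    nlinarith [norm_nonneg (transApp (JhatSAGA J σ x φ - Jbar J y) g1 +
        transApp (Jbar J y) (g1 - g2)),
      norm_nonneg (transApp (JhatSAGA J σ x φ - Jbar J y) g1),
      norm_nonneg (transApp (Jbar J y) (g1 - g2)),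
      sq_nonneg (‖transApp (JhatSAGA J σ x φ - Jbar J y) g1‖ -
        ‖transApp (Jbar J y) (g1 - g2)‖),
      mul_le_mul ha hb (norm_nonneg _) (by positivity),
      norm_nonneg (colVec (JhatSAGA J σ x φ - Jbar J y)),
      norm_nonneg (GhatSAGA G σ x φ - Gbar G y)]
  -- per-i Esig bound
  have hEi : ∀ i : Fin n, Esig (fun σ : Fin A → Fin m =>
      ‖transApp (JhatSAGA J σ x φ) (gradF i (GhatSAGA G σ x φ)) -
        transApp (Jbar J y) (gradF i (Gbar G y))‖ ^ 2)
      ≤ 4 * (BF ^ 2 * LG ^ 2 + BG ^ 4 * LF ^ 2) *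
          ((A:ℝ)⁻¹ * ((m:ℝ)⁻¹ * ∑ j, ‖x - φ j‖ ^ 2) + ‖x - y‖ ^ 2) := by
    intro i
    have mono : Esig (fun σ : Fin A → Fin m =>
        ‖transApp (JhatSAGA J σ x φ) (gradF i (GhatSAGA G σ x φ)) -
          transApp (Jbar J y) (gradF i (Gbar G y))‖ ^ 2)
        ≤ 2 * BF ^ 2 * Esig (fun σ : Fin A → Fin m =>
            ‖colVec (JhatSAGA J σ x φ - Jbar J y)‖ ^ 2)
          + 2 * (BG ^ 2 * LF ^ 2) * Esig (fun σ : Fin A → Fin m =>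
            ‖GhatSAGA G σ x φ - Gbar G y‖ ^ 2) := by
      simp only [Esig]
      rw [← mul_div_assoc, ← mul_div_assoc, ← add_div]
      gcongr
      calc (∑ σ : Fin A → Fin m,
            ‖transApp (JhatSAGA J σ x φ) (gradF i (GhatSAGA G σ x φ)) -
              transApp (Jbar J y) (gradF i (Gbar G y))‖ ^ 2)
          ≤ ∑ σ : Fin A → Fin m,
            (2 * BF ^ 2 * ‖colVec (JhatSAGA J σ x φ - Jbar J y)‖ ^ 2
              + 2 * (BG ^ 2 * LF ^ 2) * ‖GhatSAGA G σ x φ - Gbar G y‖ ^ 2) :=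
            Finset.sum_le_sum fun σ _ => hpt i σ
        _ = 2 * BF ^ 2 * ∑ σ : Fin A → Fin m, ‖colVec (JhatSAGA J σ x φ - Jbar J y)‖ ^ 2
            + 2 * (BG ^ 2 * LF ^ 2) *
              ∑ σ : Fin A → Fin m, ‖GhatSAGA G σ x φ - Gbar G y‖ ^ 2 := by
          rw [Finset.sum_add_distrib, Finset.mul_sum, Finset.mul_sum]
    refine mono.trans ?_
    have e1 := hEJ
    have e2 := hEG
    nlinarith [hKnn,
      mul_le_mul_of_nonneg_left e1 (by positivity : (0:ℝ) ≤ 2 * BF ^ 2),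
      mul_le_mul_of_nonneg_left e2 (by positivity : (0:ℝ) ≤ 2 * (BG ^ 2 * LF ^ 2))]
  -- conclude
  have hsum : ∑ i, Esig (fun σ : Fin A → Fin m =>
      ‖transApp (JhatSAGA J σ x φ) (gradF i (GhatSAGA G σ x φ)) -
        transApp (Jbar J y) (gradF i (Gbar G y))‖ ^ 2)
      ≤ (n:ℝ) * (4 * (BF ^ 2 * LG ^ 2 + BG ^ 4 * LF ^ 2) *
          ((A:ℝ)⁻¹ * ((m:ℝ)⁻¹ * ∑ j, ‖x - φ j‖ ^ 2) + ‖x - y‖ ^ 2)) := by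
    calc _ ≤ ∑ _i : Fin n, (4 * (BF ^ 2 * LG ^ 2 + BG ^ 4 * LF ^ 2) *
          ((A:ℝ)⁻¹ * ((m:ℝ)⁻¹ * ∑ j, ‖x - φ j‖ ^ 2) + ‖x - y‖ ^ 2)) :=
        Finset.sum_le_sum fun i _ => hEi i
      _ = _ := by
        rw [Finset.sum_const, Finset.card_univ, Fintype.card_fin, nsmul_eq_mul]
  have hfinal := mul_le_mul_of_nonneg_left hsum (by positivity : (0:ℝ) ≤ (n:ℝ)⁻¹)
  rw [← mul_assoc, inv_mul_cancel₀ hn'.ne', one_mul] at hfinal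
  refine hfinal.trans_eq ?_
  rw [one_div]
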